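/- Fix α > 1/2 and δ ∈ (0, 1/2]. For all sequences (R_n) and (r_n) of nonnegative reals with R_n → ∞ and (1/2 + δ)·R_n ≤ r_n ≤ R_n for all n, one has J(r_n, R_n) · (π(α − 1/2)/(2α)) · e^{R_n(α − 1/2) − r_n(α − 1)} → 1 as n → ∞, where J(r, R) = (1/(2π)) ∫_0^{2π} ∫_0^{min(r,R)} 1[cosh r · cosh s − sinh r · sinh s · cos φ ≤ cosh R] · (α sinh(α s)/(cosh(α R) − 1)) ds dφ. Equivalently, in the hyperbolic random graph model, for r > R/2, μ(B_r(R) ∩ B_0(r)) = (2α/(π(α − 1/2))) e^{−R(α − 1/2) + r(α − 1)} (1 − o(1)). -/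

import Mathlib

open Filter
open Real MeasureTheory Set Topology intervalIntegral

/-- `hrgJ α r R` is the probability measure `μ(B_r(R) ∩ B_0(r))` in the hyperbolic
random graph model: the probability that a vertex sampled in the disk of radius `R`
(with radial density `α sinh(α s)/(cosh(α R) - 1)` and uniform angle) has radial
coordinate at most `r` and lies within hyperbolic distance `R` of the point `(r, 0)`. -/
noncomputable def hrgJ (α r R : ℝ) : ℝ :=
  (1 / (2 * Real.pi)) * ∫ φ in (0 : ℝ)..(2 * Real.pi), ∫ s in (0 : ℝ)..(min r R),
    if Real.cosh r * Real.cosh s - Real.sinh r * Real.sinh s * Real.cos φ ≤ Real.cosh R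
    then α * Real.sinh (α * s) / (Real.cosh (α * R) - 1) else 0

lemma ii_ite (c d : ℝ) (a b : ℝ) :
    IntervalIntegrable (fun φ => if c ≤ Real.cos φ then d else 0) volume a b := by
  apply IntervalIntegrable.mono_fun (_root_.intervalIntegrable_const (c := |d|))
  · exact ((measurable_const.ite (measurableSet_le measurable_const Real.continuous_cos.measurable) measurable_const)).aestronglyMeasurable
  · filter_upwards with x
    by_cases h : c ≤ Real.cos x <;> simp [h, abs_nonneg]

lemma phi_int_half (c d : ℝ) (hc : c ≤ 1) :
    (∫ φ in (0:ℝ)..π, if c ≤ Real.cos φ then d else 0) = Real.arccos c * d := by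
  set A := Real.arccos c with hA
  have hA0 : 0 ≤ A := Real.arccos_nonneg c
  have hAπ : A ≤ π := Real.arccos_le_pi c
  rw [← integral_add_adjacent_intervals (ii_ite c d 0 A) (ii_ite c d A π)]
  have e1 : (∫ φ in (0:ℝ)..A, if c ≤ Real.cos φ then d else 0) = A * d := by
    rw [intervalIntegral.integral_congr (g := fun _ => d)]
    · simp [smul_eq_mul]
    · intro φ hφ
      rw [Set.uIcc_of_le hA0] at hφ
      have : c ≤ Real.cos φ := by
        rcases le_or_gt (-1) c with h | h
        · have hcos : Real.cos A = c := Real.cos_arccos h hc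
          calc c = Real.cos A := hcos.symm
            _ ≤ Real.cos φ := Real.cos_le_cos_of_nonneg_of_le_pi hφ.1 hAπ hφ.2
        · linarith [Real.neg_one_le_cos φ]
      simp [this]
  have e2 : (∫ φ in A..π, if c ≤ Real.cos φ then d else 0) = 0 := by
    rw [intervalIntegral.integral_congr_ae (g := fun _ => 0)]
    · simp
    · filter_upwards with φ hφ
      rw [Set.uIoc_of_le hAπ] at hφ
      rcases le_or_gt c (-1) with h | h
      · exfalso
        have : A = π := Real.arccos_eq_pi.2 h
        rw [this] at hφ; exact absurd hφ.2 (not_le.2 hφ.1)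
      · have hφ0 : 0 ≤ φ := le_trans hA0 hφ.1.le
        have : Real.cos φ < Real.cos A :=
          Real.strictAntiOn_cos ⟨hA0, hAπ⟩ ⟨hφ0, hφ.2⟩ hφ.1
        rw [Real.cos_arccos h.le hc] at this
        simp [not_le.2 this]
  rw [e1, e2, add_zero]

lemma phi_int (c d : ℝ) (hc : c ≤ 1) :
    (∫ φ in (0:ℝ)..(2*π), if c ≤ Real.cos φ then d else 0) = 2 * Real.arccos c * d := by
  have h2 : (∫ φ in π..(2*π), if c ≤ Real.cos φ then d else 0) = Real.arccos c * d := by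
    have hsub := intervalIntegral.integral_comp_sub_left
      (fun φ => if c ≤ Real.cos φ then d else 0) (2*π) (a := 0) (b := π)
    simp only [Real.cos_two_pi_sub] at hsub
    rw [show 2*π - π = π by ring, sub_zero] at hsub
    rw [← hsub, phi_int_half c d hc]
  rw [← integral_add_adjacent_intervals (ii_ite c d 0 π) (ii_ite c d π (2*π)),
    phi_int_half c d hc, h2]
  ring


lemma hrgJ_eq (α r R : ℝ) (hα : 0 < α) (hr : 0 < r) (hrR : r ≤ R) :
    hrgJ α r R = (1/π) * ∫ s in (0:ℝ)..r,
      Real.arccos ((Real.cosh r * Real.cosh s - Real.cosh R)/(Real.sinh r * Real.sinh s))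
        * (α * Real.sinh (α*s) / (Real.cosh (α*R) - 1)) := by
  have hπ := Real.pi_pos
  have h2π : (0:ℝ) ≤ 2*π := by linarith
  have hR0 : 0 < R := lt_of_lt_of_le hr hrR
  have hαR : 0 < α*R := mul_pos hα hR0
  have hcosh : 1 < Real.cosh (α*R) := by
    rw [← Real.cosh_zero]
    apply Real.cosh_lt_cosh.2
    rwa [abs_zero, abs_of_pos hαR]
  set D : ℝ → ℝ := fun s => α * Real.sinh (α*s) / (Real.cosh (α*R) - 1) with hD
  set F : ℝ → ℝ → ℝ := fun φ s =>
    if Real.cosh r * Real.cosh s - Real.sinh r * Real.sinh s * Real.cos φ ≤ Real.cosh R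
    then D s else 0 with hF
  have hmin : min r R = r := min_eq_left hrR
  have hSmeas : MeasurableSet {p : ℝ × ℝ | Real.cosh r * Real.cosh p.2
      - Real.sinh r * Real.sinh p.2 * Real.cos p.1 ≤ Real.cosh R} := by
    apply measurableSet_le
    · fun_prop
    · exact measurable_const
  have hFmeas : Measurable (Function.uncurry F) := by
    have : Function.uncurry F = fun p : ℝ × ℝ =>
        if Real.cosh r * Real.cosh p.2 - Real.sinh r * Real.sinh p.2 * Real.cos p.1 ≤ Real.cosh R
        then D p.2 else 0 := rfl
    rw [this]
    apply Measurable.ite hSmeas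
    · fun_prop
    · exact measurable_const
  have hDnonneg : ∀ s, 0 ≤ s → 0 ≤ D s := by
    intro s hs
    rw [hD]
    have h1 := Real.sinh_nonneg_iff.2 (by positivity : (0:ℝ) ≤ α*s)
    have h2 : (0:ℝ) < Real.cosh (α*R) - 1 := by linarith
    positivity
  have hDmono : ∀ s, 0 ≤ s → s ≤ r → D s ≤ D r := by
    intro s hs hsr
    rw [hD]
    dsimp only
    gcongr
    exact Real.sinh_le_sinh.2 (by nlinarith)
  have hInt : Integrable (Function.uncurry F)
      ((volume.restrict (Ioc 0 (2*π))).prod (volume.restrict (Ioc 0 r))) := by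
    have hbound : ∀ᵐ p : ℝ × ℝ ∂((volume.restrict (Ioc 0 (2*π))).prod (volume.restrict (Ioc 0 r))),
        ‖Function.uncurry F p‖ ≤ D r := by
      have hnull : ((volume.restrict (Ioc 0 (2*π))).prod (volume.restrict (Ioc 0 r)))
          (Set.univ ×ˢ (Ioc 0 r)ᶜ) = 0 := by
        rw [Measure.prod_prod]
        have : (volume.restrict (Ioc 0 r)) ((Ioc 0 r)ᶜ) = 0 := by
          rw [Measure.restrict_apply (measurableSet_Ioc.compl)]
          simp
        rw [this, mul_zero]
      rw [ae_iff]
      refine measure_mono_null ?_ hnull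
      intro p hp
      simp only [Set.mem_setOf_eq, not_le] at hp
      refine ⟨trivial, fun hmem => absurd hp ?_⟩
      push_neg
      have h1 : ‖Function.uncurry F p‖ ≤ |D p.2| := by
        show ‖F p.1 p.2‖ ≤ _
        rw [hF]; dsimp only; split
        · simp
        · simp [abs_nonneg]
      refine h1.trans ?_
      rw [abs_of_nonneg (hDnonneg _ hmem.1.le)]
      exact hDmono _ hmem.1.le hmem.2
    exact Integrable.mono' (integrable_const _) hFmeas.aestronglyMeasurable hbound
  have hswap : (∫ φ in (0:ℝ)..(2*π), ∫ s in (0:ℝ)..r, F φ s)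
      = ∫ s in (0:ℝ)..r, ∫ φ in (0:ℝ)..(2*π), F φ s := by
    simp only [intervalIntegral.integral_of_le h2π, intervalIntegral.integral_of_le hr.le]
    exact MeasureTheory.integral_integral_swap hInt
  have hinner : ∀ s ∈ Ioc (0:ℝ) r, (∫ φ in (0:ℝ)..(2*π), F φ s)
      = 2 * Real.arccos ((Real.cosh r * Real.cosh s - Real.cosh R)/(Real.sinh r * Real.sinh s)) * D s := by
    intro s hs
    set cs := (Real.cosh r * Real.cosh s - Real.cosh R)/(Real.sinh r * Real.sinh s) with hcs
    have hpos : 0 < Real.sinh r * Real.sinh s :=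
      mul_pos (Real.sinh_pos_iff.2 hr) (Real.sinh_pos_iff.2 hs.1)
    have hcs1 : cs ≤ 1 := by
      rw [hcs, div_le_one hpos]
      have h1 : Real.cosh (r - s) = Real.cosh r * Real.cosh s - Real.sinh r * Real.sinh s :=
        Real.cosh_sub r s
      have h2 : Real.cosh (r - s) ≤ Real.cosh R := by
        apply Real.cosh_le_cosh.2
        rw [abs_of_nonneg (by linarith [hs.2] : (0:ℝ) ≤ r - s),
          abs_of_pos hR0]
        linarith [hs.1, hs.2]
      linarith
    have hrw : ∀ φ, F φ s = if cs ≤ Real.cos φ then D s else 0 := by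
      intro φ
      rw [hF]
      dsimp only
      apply if_congr _ rfl rfl
      rw [hcs, div_le_iff₀ hpos]
      constructor <;> intro h <;> nlinarith
    rw [intervalIntegral.integral_congr (g := fun φ => if cs ≤ Real.cos φ then D s else 0)
      (fun φ _ => hrw φ)]
    exact phi_int cs (D s) hcs1
  rw [hrgJ, hmin, hswap]
  rw [intervalIntegral.integral_congr_ae (g := fun s =>
    2 * (Real.arccos ((Real.cosh r * Real.cosh s - Real.cosh R)/(Real.sinh r * Real.sinh s)) * D s))]
  · rw [intervalIntegral.integral_const_mul]
    have hπne : π ≠ 0 := ne_of_gt hπ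
    have hX : ∀ X : ℝ, 1/(2*π) * (2 * X) = 1/π * X := by
      intro X; field_simp
    exact hX _
  · filter_upwards with s hs
    rw [Set.uIoc_of_le hr.le] at hs
    rw [hinner s hs]
    ring


lemma sqrt_exp' (y : ℝ) : Real.sqrt (Real.exp y) = Real.exp (y/2) := by
  rw [show Real.exp y = Real.exp (y/2) * Real.exp (y/2) by rw [← Real.exp_add]; ring_nf]
  exact Real.sqrt_mul_self (Real.exp_nonneg _)

lemma arccos_le_sqrt (y : ℝ) : Real.arccos y ≤ π * Real.sqrt ((1-y)/2) := by
  have hπ := Real.pi_pos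
  rcases le_or_gt y (-1) with h | h
  · rw [Real.arccos_of_le_neg_one h]
    have h1 : (1:ℝ) ≤ (1-y)/2 := by linarith
    nlinarith [Real.one_le_sqrt.2 h1]
  rcases le_or_gt 1 y with h' | h'
  · rw [Real.arccos_of_one_le h']
    positivity
  · set θ := Real.arccos y with hθ
    have hθ0 : 0 ≤ θ := Real.arccos_nonneg y
    have hθπ : θ ≤ π := Real.arccos_le_pi y
    have hsin : Real.sin (θ/2) = Real.sqrt ((1 - Real.cos θ)/2) :=
      Real.sin_half_eq_sqrt (by linarith) (by linarith)
    have hcos : Real.cos θ = y := Real.cos_arccos h.le h'.le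
    have hj : 2/π * (θ/2) ≤ Real.sin (θ/2) :=
      Real.mul_le_sin (by linarith) (by linarith)
    rw [hcos] at hsin
    have hc : π * (2/π * (θ/2)) = θ := by field_simp
    nlinarith [mul_le_mul_of_nonneg_left hj hπ.le]

lemma two_sin_half_arccos {x : ℝ} (h0 : 0 ≤ x) (h2 : x ≤ 2) :
    2 * Real.sin (Real.arccos (1 - x) / 2) = Real.sqrt (2*x) := by
  have hθ0 : 0 ≤ Real.arccos (1-x) := Real.arccos_nonneg _
  have hθπ : Real.arccos (1-x) ≤ π := Real.arccos_le_pi _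
  have hπ := Real.pi_pos
  have hsin : Real.sin (Real.arccos (1-x)/2) = Real.sqrt ((1 - Real.cos (Real.arccos (1-x)))/2) :=
    Real.sin_half_eq_sqrt (by linarith) (by linarith)
  rw [hsin, Real.cos_arccos (by linarith) (by linarith)]
  rw [show (1 - (1-x))/2 = x/2 by ring]
  rw [show (2:ℝ)*x = 4*(x/2) by ring, show (4:ℝ) = 2^2 by norm_num, Real.sqrt_mul (by positivity), Real.sqrt_sq (by norm_num : (0:ℝ) ≤ 2)]

lemma sinh_le_half_exp (y : ℝ) : Real.sinh y ≤ Real.exp y / 2 := by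
  rw [Real.sinh_eq]
  have := Real.exp_pos (-y)
  linarith

lemma sinh_ge (y : ℝ) (hy : 1 ≤ y) : (2/5) * Real.exp y ≤ Real.sinh y := by
  rw [Real.sinh_eq]
  have h1 : Real.exp (-y) ≤ Real.exp (-1) := Real.exp_le_exp.2 (by linarith)
  have h2 : Real.exp (-1) ≤ (1:ℝ)/5 * Real.exp y := by
    rw [Real.exp_neg]
    rw [inv_le_iff_one_le_mul₀ (Real.exp_pos 1)]
    have h3 : Real.exp 1 ≤ Real.exp y := Real.exp_le_exp.2 hy
    have h4 : (2.7182818283:ℝ) < Real.exp 1 := Real.exp_one_gt_d9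
    nlinarith
  linarith

lemma cosh_le_exp (y : ℝ) (hy : 0 ≤ y) : Real.cosh y ≤ Real.exp y := by
  rw [Real.cosh_eq]
  have h1 : Real.exp (-y) ≤ Real.exp y := Real.exp_le_exp.2 (by linarith)
  linarith [Real.exp_pos (-y)]

lemma cosh_sub_one_ge (y : ℝ) (hy : 4 ≤ y) : Real.exp y / 4 ≤ Real.cosh y - 1 := by
  rw [Real.cosh_eq]
  have h1 : (5:ℝ) ≤ Real.exp y := by
    calc (5:ℝ) ≤ 1 + y := by linarith
    _ ≤ Real.exp y := by linarith [Real.add_one_le_exp y]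
  have := Real.exp_pos (-y)
  linarith

lemma integral_rate (b : ℝ) (hb : 0 < b) :
    (∫ t in Ioi (0:ℝ), b * Real.exp (-(b*t))) = 1 := by
  rw [MeasureTheory.integral_const_mul]
  have h := integral_comp_mul_left_Ioi (fun x => Real.exp (-x)) 0 hb
  simp only [mul_zero] at h
  rw [show (fun t : ℝ => Real.exp (-(b*t))) = fun t : ℝ => Real.exp (-(b*t)) from rfl]
  have : (∫ t in Ioi (0:ℝ), Real.exp (-(b*t))) = b⁻¹ • ∫ x in Ioi (0:ℝ), Real.exp (-x) := h
  rw [this, integral_exp_neg_Ioi_zero, smul_eq_mul, mul_one, mul_inv_cancel₀ (ne_of_gt hb)]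


noncomputable def fAux (α r R t : ℝ) : ℝ :=
  (α - 1/2)/(2*α) * Real.exp (R*(α-1/2) - r*(α-1)) / (Real.cosh (α*R) - 1) *
    (Real.arccos ((Real.cosh r * Real.cosh (r-t) - Real.cosh R)/(Real.sinh r * Real.sinh (r-t)))
      * (α * Real.sinh (α*(r-t))))


lemma exp_neg_comp_tendsto {y : ℕ → ℝ} (hy : Tendsto y atTop atTop) :
    Tendsto (fun n => Real.exp (-(y n))) atTop (𝓝 0) :=
  Real.tendsto_exp_neg_atTop_nhds_zero.comp hy

lemma sinh_exp_tendsto {y : ℕ → ℝ} (hy : Tendsto y atTop atTop) :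
    Tendsto (fun n => Real.sinh (y n) * Real.exp (-(y n))) atTop (𝓝 (1/2)) := by
  have hid : ∀ a : ℝ, Real.sinh a * Real.exp (-a) = (1 - Real.exp (-(2*a)))/2 := by
    intro a
    have h1 : Real.exp a * Real.exp (-a) = 1 := by rw [← Real.exp_add]; simp
    rw [Real.sinh_eq, show -(2*a) = -a + -a by ring, Real.exp_add]
    linear_combination (1/2) * h1
  simp only [hid]
  have h0 : Tendsto (fun n => Real.exp (-(2 * y n))) atTop (𝓝 0) :=
    exp_neg_comp_tendsto (hy.const_mul_atTop (by norm_num : (0:ℝ) < 2))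
  have : Tendsto (fun n => (1 - Real.exp (-(2 * y n)))/2) atTop (𝓝 ((1 - 0)/2)) :=
    ((tendsto_const_nhds.sub h0)).div_const 2
  simpa using this

lemma cosh_exp_tendsto {y : ℕ → ℝ} (hy : Tendsto y atTop atTop) :
    Tendsto (fun n => Real.cosh (y n) * Real.exp (-(y n))) atTop (𝓝 (1/2)) := by
  have hid : ∀ a : ℝ, Real.cosh a * Real.exp (-a) = (1 + Real.exp (-(2*a)))/2 := by
    intro a
    have h1 : Real.exp a * Real.exp (-a) = 1 := by rw [← Real.exp_add]; simp
    rw [Real.cosh_eq, show -(2*a) = -a + -a by ring, Real.exp_add]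
    linear_combination (1/2) * h1
  simp only [hid]
  have h0 : Tendsto (fun n => Real.exp (-(2 * y n))) atTop (𝓝 0) :=
    exp_neg_comp_tendsto (hy.const_mul_atTop (by norm_num : (0:ℝ) < 2))
  have : Tendsto (fun n => (1 + Real.exp (-(2 * y n)))/2) atTop (𝓝 ((1 + 0)/2)) :=
    ((tendsto_const_nhds.add h0)).div_const 2
  simpa using this

lemma cosh_sub_one_exp_tendsto {y : ℕ → ℝ} (hy : Tendsto y atTop atTop) :
    Tendsto (fun n => (Real.cosh (y n) - 1) * Real.exp (-(y n))) atTop (𝓝 (1/2)) := by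
  have hid : ∀ a : ℝ, (Real.cosh a - 1) * Real.exp (-a)
      = Real.cosh a * Real.exp (-a) - Real.exp (-a) := by intro a; ring
  simp only [hid]
  have := (cosh_exp_tendsto hy).sub (exp_neg_comp_tendsto hy)
  simpa using this

lemma sin_div_tendsto_one : Tendsto (fun y : ℝ => Real.sin y / y) (𝓝[≠] 0) (𝓝 1) := by
  have h := Real.hasDerivAt_sin 0
  rw [Real.cos_zero] at h
  rw [hasDerivAt_iff_tendsto_slope] at h
  apply h.congr'
  filter_upwards [self_mem_nhdsWithin] with y hy
  simp [slope_fun_def_field, Real.sin_zero]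


lemma fAux_nonneg (α r R t : ℝ) (hα : 1/2 < α) (htr : t ≤ r) : 0 ≤ fAux α r R t := by
  unfold fAux
  have h1 : (0:ℝ) ≤ Real.cosh (α*R) - 1 := by linarith [Real.one_le_cosh (α*R)]
  have h2 := Real.arccos_nonneg ((Real.cosh r * Real.cosh (r-t) - Real.cosh R)/(Real.sinh r * Real.sinh (r-t)))
  have h3 : (0:ℝ) ≤ Real.sinh (α*(r-t)) := Real.sinh_nonneg_iff.2 (by nlinarith)
  have h4 : (0:ℝ) ≤ α := by linarith
  apply mul_nonneg
  · apply div_nonneg _ h1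
    apply mul_nonneg (div_nonneg (by linarith) (by linarith)) (Real.exp_nonneg _)
  · exact mul_nonneg h2 (mul_nonneg h4 h3)

set_option maxHeartbeats 2000000 in
lemma fAux_bound (α δ r R t : ℝ) (hα : 1/2 < α) (hδ0 : 0 < δ) (hδ1 : δ ≤ 1/2)
    (hR2 : 2 ≤ R) (hαR : 4 ≤ α*R) (hlow : (1/2+δ)*R ≤ r) (hrR : r ≤ R)
    (ht0 : 0 < t) (htr : t ≤ r) :
    fAux α r R t ≤ (α-1/2)*(7 + 4*Real.exp α) * Real.exp (-(min (1/2) (α-1/2)) * t) := by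
  have hα0 : (0:ℝ) < α := by linarith
  have hπ := Real.pi_pos
  have hr1 : (1:ℝ) ≤ r := by nlinarith
  set β := min (1/2) (α-1/2) with hβ
  have hβ1 : β ≤ 1/2 := min_le_left _ _
  have hβ2 : β ≤ α - 1/2 := min_le_right _ _
  have hβ0 : 0 < β := lt_min (by norm_num) (by linarith)
  obtain ⟨s, hs⟩ : ∃ s', s' = r - t := ⟨_, rfl⟩
  have hs0 : 0 ≤ s := by rw [hs]; linarith
  have hsr : s < r := by rw [hs]; linarith
  have hcosh1 : Real.exp (α*R) / 4 ≤ Real.cosh (α*R) - 1 := cosh_sub_one_ge _ hαR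
  have hcoshpos : (0:ℝ) < Real.cosh (α*R) - 1 := by
    have := Real.exp_pos (α*R); linarith
  set c₀ := (α - 1/2)/(2*α) with hc₀
  have hc₀pos : 0 < c₀ := div_pos (by linarith) (by linarith)
  have hC : (α - 1/2)/(2*α) * Real.exp (R*(α-1/2) - r*(α-1)) / (Real.cosh (α*R) - 1)
      ≤ c₀ * 4 * Real.exp (R*(α-1/2) - r*(α-1) - α*R) := by
    rw [div_le_iff₀ hcoshpos]
    have h1 : c₀ * 4 * Real.exp (R*(α-1/2) - r*(α-1) - α*R) * (Real.cosh (α*R) - 1)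
        ≥ c₀ * 4 * Real.exp (R*(α-1/2) - r*(α-1) - α*R) * (Real.exp (α*R)/4) := by
      gcongr
    have h2 : c₀ * 4 * Real.exp (R*(α-1/2) - r*(α-1) - α*R) * (Real.exp (α*R)/4)
        = c₀ * Real.exp (R*(α-1/2) - r*(α-1)) := by
      rw [show R*(α-1/2) - r*(α-1) - α*R = (R*(α-1/2) - r*(α-1)) + (- (α*R)) by ring,
        Real.exp_add, Real.exp_neg]
      have := Real.exp_ne_zero (α*R)
      field_simp
    rw [hc₀] at h2 ⊢
    linarith
  have harcnn := Real.arccos_nonneg ((Real.cosh r * Real.cosh s - Real.cosh R)/(Real.sinh r * Real.sinh s))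
  have hsinhnn : (0:ℝ) ≤ Real.sinh (α*s) := Real.sinh_nonneg_iff.2 (by positivity)
  have hSnn : (0:ℝ) ≤ α * Real.sinh (α*s) := by positivity
  have hS : α * Real.sinh (α*s) ≤ α/2 * Real.exp (α*s) := by
    have := sinh_le_half_exp (α*s)
    nlinarith
  set c := (Real.cosh r * Real.cosh s - Real.cosh R)/(Real.sinh r * Real.sinh s) with hcc
  have hfx : fAux α r R t = (α - 1/2)/(2*α) * Real.exp (R*(α-1/2) - r*(α-1)) / (Real.cosh (α*R) - 1) *
      (Real.arccos c * (α * Real.sinh (α*s))) := by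
    rw [hcc]
    unfold fAux
    rw [← hs]
  have hCnn : 0 ≤ (α - 1/2)/(2*α) * Real.exp (R*(α-1/2) - r*(α-1)) / (Real.cosh (α*R) - 1) := by
    apply div_nonneg _ hcoshpos.le
    exact mul_nonneg (div_nonneg (by linarith) (by linarith)) (Real.exp_nonneg _)
  rw [hfx]
  rcases le_or_gt t (r-1) with hcase | hcase
  · -- main regime: s ≥ 1
    have hs1 : (1:ℝ) ≤ s := by rw [hs]; linarith
    have hd : (0:ℝ) < Real.sinh r * Real.sinh s :=
      mul_pos (Real.sinh_pos_iff.2 (by linarith)) (Real.sinh_pos_iff.2 (by linarith))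
    have hid : Real.cosh r * Real.cosh s - Real.sinh r * Real.sinh s = Real.cosh (r - s) :=
      (Real.cosh_sub r s).symm
    have hx : 1 - c = (Real.cosh R - Real.cosh (r - s))/(Real.sinh r * Real.sinh s) := by
      rw [hcc, eq_div_iff hd.ne']
      have : (1 - (Real.cosh r * Real.cosh s - Real.cosh R) / (Real.sinh r * Real.sinh s))
          * (Real.sinh r * Real.sinh s)
          = Real.sinh r * Real.sinh s - (Real.cosh r * Real.cosh s - Real.cosh R) := by
        field_simp
      rw [this, ← hid]
      ring
    have hx2 : 1 - c ≤ Real.cosh R / (Real.sinh r * Real.sinh s) := by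
      rw [hx]
      gcongr
      · linarith [Real.one_le_cosh (r - s)]
    have hmul : (2/5 * Real.exp r) * (2/5 * Real.exp s) ≤ Real.sinh r * Real.sinh s :=
      mul_le_mul (sinh_ge r hr1) (sinh_ge s hs1) (by positivity)
        (Real.sinh_nonneg_iff.2 (by linarith))
    have hx3 : Real.cosh R / (Real.sinh r * Real.sinh s)
        ≤ Real.exp R / ((2/5 * Real.exp r) * (2/5 * Real.exp s)) :=
      div_le_div₀ (Real.exp_nonneg R) (cosh_le_exp R (by linarith)) (by positivity) hmul
    have hx4 : Real.exp R / ((2/5 * Real.exp r) * (2/5 * Real.exp s))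
        = 25/4 * Real.exp (R - r - s) := by
      rw [show R - r - s = R + (-r) + (-s) by ring, Real.exp_add, Real.exp_add,
        Real.exp_neg r, Real.exp_neg s]
      have h1 := Real.exp_ne_zero r
      have h2 := Real.exp_ne_zero s
      field_simp
      ring
    have hxfin : (1 - c)/2 ≤ 4 * Real.exp (R - r - s) := by
      have := hx2.trans (hx3.trans_eq hx4)
      have hep := Real.exp_pos (R - r - s)
      nlinarith
    have hB : Real.arccos c ≤ π * (2 * Real.exp ((R - r - s)/2)) := by
      refine (arccos_le_sqrt c).trans ?_
      have h2 : Real.sqrt (4 * Real.exp (R - r - s)) = 2 * Real.exp ((R - r - s)/2) := by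
        rw [Real.sqrt_mul (by norm_num : (0:ℝ) ≤ 4), sqrt_exp',
          show (4:ℝ) = 2^2 by norm_num, Real.sqrt_sq (by norm_num : (0:ℝ) ≤ 2)]
      have h1 : Real.sqrt ((1-c)/2) ≤ 2 * Real.exp ((R - r - s)/2) :=
        h2 ▸ Real.sqrt_le_sqrt hxfin
      exact mul_le_mul_of_nonneg_left h1 hπ.le
    calc (α - 1/2)/(2*α) * Real.exp (R*(α-1/2) - r*(α-1)) / (Real.cosh (α*R) - 1) *
        (Real.arccos c * (α * Real.sinh (α*s)))
        ≤ (c₀ * 4 * Real.exp (R*(α-1/2) - r*(α-1) - α*R)) *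
          ((π * (2 * Real.exp ((R - r - s)/2))) * (α/2 * Real.exp (α*s))) := by
          apply mul_le_mul hC (mul_le_mul hB hS hSnn (by positivity))
            (mul_nonneg harcnn hSnn) (by positivity)
      _ = 4*π*α*c₀ * Real.exp ((R*(α-1/2) - r*(α-1) - α*R) + ((R - r - s)/2 + α*s)) := by
          rw [Real.exp_add, Real.exp_add]
          ring
      _ ≤ (α-1/2)*(7 + 4*Real.exp α) * Real.exp (-(min (1/2) (α-1/2)) * t) := by
          have hexp : (R*(α-1/2) - r*(α-1) - α*R) + ((R - r - s)/2 + α*s) = -(α-1/2)*t := by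
            rw [hs]; ring
          rw [hexp]
          have hco : 4*π*α*c₀ = 2*π*(α-1/2) := by
            rw [hc₀]; field_simp; ring
          have hco2 : 2*π*(α-1/2) ≤ (α-1/2)*(7 + 4*Real.exp α) := by
            have hπ4 : π < 3.15 := Real.pi_lt_d2
            nlinarith [Real.exp_pos α]
          apply mul_le_mul (hco ▸ hco2) (Real.exp_le_exp.2 (by rw [← hβ]; nlinarith))
            (Real.exp_nonneg _) (by nlinarith [Real.exp_pos α])
  · -- edge regime: s < 1
    have hsle1 : s ≤ 1 := by rw [hs]; linarith
    have hS2 : α * Real.sinh (α*s) ≤ α/2 * Real.exp α := by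
      refine hS.trans ?_
      have : Real.exp (α*s) ≤ Real.exp α := Real.exp_le_exp.2 (by nlinarith)
      gcongr
    calc (α - 1/2)/(2*α) * Real.exp (R*(α-1/2) - r*(α-1)) / (Real.cosh (α*R) - 1) *
        (Real.arccos c * (α * Real.sinh (α*s)))
        ≤ (c₀ * 4 * Real.exp (R*(α-1/2) - r*(α-1) - α*R)) * (π * (α/2 * Real.exp α)) := by
          apply mul_le_mul hC (mul_le_mul (Real.arccos_le_pi c) hS2 hSnn hπ.le)
            (mul_nonneg harcnn hSnn) (by positivity)
      _ = (2*π*α*c₀ * Real.exp α) * Real.exp (R*(α-1/2) - r*(α-1) - α*R) := by ring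
      _ ≤ (α-1/2)*(7 + 4*Real.exp α) * Real.exp (-(min (1/2) (α-1/2)) * t) := by
          have hE1 : R*(α-1/2) - r*(α-1) - α*R ≤ -(min (1/2) (α-1/2)) * t := by
            rcases le_total α 1 with h1 | h1
            · nlinarith [mul_nonneg (sub_nonneg.2 hβ2) ht0.le,
                mul_nonneg (by linarith : (0:ℝ) ≤ α - 1/2) (by linarith : (0:ℝ) ≤ R - t),
                mul_nonneg (by linarith : (0:ℝ) ≤ 1 - α) (by linarith : (0:ℝ) ≤ R - r)]
            · nlinarith [mul_nonneg (sub_nonneg.2 hβ1) ht0.le,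
                mul_nonneg (by linarith : (0:ℝ) ≤ r) (by linarith : (0:ℝ) ≤ α - 1)]
          have hco : 2*π*α*c₀ * Real.exp α = π*(α-1/2) * Real.exp α := by
            rw [hc₀]; field_simp
          have hco2 : π*(α-1/2) * Real.exp α ≤ (α-1/2)*(7 + 4*Real.exp α) := by
            have hπ4 : π ≤ 4 := Real.pi_le_four
            nlinarith [mul_nonneg (mul_nonneg (by linarith : (0:ℝ) ≤ α-1/2) (Real.exp_nonneg α))
              (by linarith : (0:ℝ) ≤ 4 - π), (by linarith : (0:ℝ) ≤ α - 1/2)]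
          apply mul_le_mul (hco ▸ hco2) (Real.exp_le_exp.2 hE1)
            (Real.exp_nonneg _) (by nlinarith [Real.exp_pos α])


lemma T_eq (α r R : ℝ) (hα : 0 < α) (hr : 0 < r) (hrR : r ≤ R) :
    hrgJ α r R * (π*(α-1/2)/(2*α)) * Real.exp (R*(α-1/2) - r*(α-1))
      = ∫ t in Ioi (0:ℝ), (Ioc (0:ℝ) r).indicator (fAux α r R) t := by
  have hπ := Real.pi_pos
  have hπne : π ≠ 0 := ne_of_gt hπ
  -- RHS transformations
  have e1 : (∫ t in Ioi (0:ℝ), (Ioc (0:ℝ) r).indicator (fAux α r R) t)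
      = ∫ t in Ioc (0:ℝ) r, fAux α r R t := by
    rw [MeasureTheory.integral_indicator measurableSet_Ioc,
      Measure.restrict_restrict measurableSet_Ioc,
      Set.inter_eq_self_of_subset_left Set.Ioc_subset_Ioi_self]
  have e2 : (∫ t in Ioc (0:ℝ) r, fAux α r R t) = ∫ t in (0:ℝ)..r, fAux α r R t :=
    (intervalIntegral.integral_of_le hr.le).symm
  have e3 : (∫ t in (0:ℝ)..r, fAux α r R t) = ∫ s in (0:ℝ)..r,
      (α - 1/2)/(2*α) * Real.exp (R*(α-1/2) - r*(α-1)) / (Real.cosh (α*R) - 1) *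
      (Real.arccos ((Real.cosh r * Real.cosh s - Real.cosh R)/(Real.sinh r * Real.sinh s))
      * (α * Real.sinh (α*s))) := by
    have := intervalIntegral.integral_comp_sub_left (fun s =>
      (α - 1/2)/(2*α) * Real.exp (R*(α-1/2) - r*(α-1)) / (Real.cosh (α*R) - 1) *
      (Real.arccos ((Real.cosh r * Real.cosh s - Real.cosh R)/(Real.sinh r * Real.sinh s))
      * (α * Real.sinh (α*s)))) r (a := 0) (b := r)
    rw [sub_zero, sub_self] at this
    exact this
  rw [e1, e2, e3, hrgJ_eq α r R hα hr hrR]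
  rw [intervalIntegral.integral_const_mul]
  have e4 : (∫ s in (0:ℝ)..r,
      Real.arccos ((Real.cosh r * Real.cosh s - Real.cosh R)/(Real.sinh r * Real.sinh s))
        * (α * Real.sinh (α*s) / (Real.cosh (α*R) - 1)))
      = (∫ s in (0:ℝ)..r,
      Real.arccos ((Real.cosh r * Real.cosh s - Real.cosh R)/(Real.sinh r * Real.sinh s))
        * (α * Real.sinh (α*s))) * (Real.cosh (α*R) - 1)⁻¹ := by
    rw [← intervalIntegral.integral_mul_const]
    apply intervalIntegral.integral_congr
    intro s _
    ring
  rw [e4]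
  have hR0 : 0 < R := lt_of_lt_of_le hr hrR
  have hαR : 0 < α*R := mul_pos hα hR0
  have hcosh : 1 < Real.cosh (α*R) := by
    rw [← Real.cosh_zero]
    apply Real.cosh_lt_cosh.2
    rwa [abs_zero, abs_of_pos hαR]
  have hcne : Real.cosh (α*R) - 1 ≠ 0 := ne_of_gt (by linarith)
  set I := (∫ s in (0:ℝ)..r,
      Real.arccos ((Real.cosh r * Real.cosh s - Real.cosh R)/(Real.sinh r * Real.sinh s))
        * (α * Real.sinh (α*s))) with hI
  field_simp


lemma fAux_tendsto (α δ : ℝ) (hα : 1/2 < α) (hδ0 : 0 < δ) (hδ1 : δ ≤ 1/2)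
    (R r : ℕ → ℝ) (hR : Tendsto R atTop atTop)
    (hlow : ∀ n, (1/2 + δ) * R n ≤ r n) (hhigh : ∀ n, r n ≤ R n)
    (t : ℝ) (ht : 0 < t) :
    Tendsto (fun n => (Set.Ioc (0:ℝ) (r n)).indicator (fAux α (r n) (R n)) t) atTop
      (𝓝 ((α - 1/2) * Real.exp (-(α - 1/2)*t))) := by
  have hα0 : (0:ℝ) < α := by linarith
  have hrT : Tendsto r atTop atTop := by
    apply tendsto_atTop_mono hlow
    exact hR.const_mul_atTop (by linarith : (0:ℝ) < 1/2 + δ)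
  have hsT : Tendsto (fun n => r n - t) atTop atTop := hrT.atTop_add tendsto_const_nhds
  have hαsT : Tendsto (fun n => α * (r n - t)) atTop atTop :=
    hsT.const_mul_atTop hα0
  have hαRT : Tendsto (fun n => α * R n) atTop atTop := hR.const_mul_atTop hα0
  -- definitions
  set x : ℕ → ℝ := fun n => (Real.cosh (R n) - Real.cosh t)/(Real.sinh (r n) * Real.sinh (r n - t)) with hxdef
  set A : ℕ → ℝ := fun n => x n * Real.exp (2*r n - t - R n) with hAdef
  set θ : ℕ → ℝ := fun n => Real.arccos (1 - x n) with hθdef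
  -- limit of A
  have hA : Tendsto A atTop (𝓝 2) := by
    have hN : Tendsto (fun n => (Real.cosh (R n) - Real.cosh t) * Real.exp (-(R n))) atTop (𝓝 (1/2)) := by
      have h1 := cosh_exp_tendsto hR
      have h2 : Tendsto (fun n => Real.cosh t * Real.exp (-(R n))) atTop (𝓝 0) := by
        simpa using (exp_neg_comp_tendsto hR).const_mul (Real.cosh t)
      have := h1.sub h2
      simp only [sub_mul] at *
      simpa using this
    have hD : Tendsto (fun n => (Real.sinh (r n) * Real.exp (-(r n)))
        * (Real.sinh (r n - t) * Real.exp (-(r n - t)))) atTop (𝓝 (1/4)) := by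
      have := (sinh_exp_tendsto hrT).mul (sinh_exp_tendsto hsT)
      norm_num at this
      convert this using 2
      norm_num
    have hdiv := hN.div hD (by norm_num : (1/4 : ℝ) ≠ 0)
    have heq : ∀ᶠ n in atTop, (fun n => (Real.cosh (R n) - Real.cosh t) * Real.exp (-(R n)) /
        ((Real.sinh (r n) * Real.exp (-(r n))) * (Real.sinh (r n - t) * Real.exp (-(r n - t))))) n
        = A n := by
      filter_upwards [hrT.eventually_ge_atTop (t+1)] with n hn
      have hs1 : (0:ℝ) < Real.sinh (r n) := Real.sinh_pos_iff.2 (by linarith)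
      have hs2 : (0:ℝ) < Real.sinh (r n - t) := Real.sinh_pos_iff.2 (by linarith)
      rw [hAdef]
      dsimp only
      rw [hxdef]
      dsimp only
      rw [show 2*r n - t - R n = r n + (r n - t) + (-(R n)) by ring, Real.exp_add, Real.exp_add]
      rw [Real.exp_neg (r n), Real.exp_neg (r n - t)]
      have e1 := Real.exp_ne_zero (r n)
      have e2 := Real.exp_ne_zero (r n - t)
      field_simp
    have : Tendsto A atTop (𝓝 ((1/2)/(1/4))) := hdiv.congr' heq
    norm_num at this
    exact this
  -- x → 0
  have hu0 : Tendsto (fun n => Real.exp (R n - 2*r n + t)) atTop (𝓝 0) := by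
    have h1 : Tendsto (fun n => 2*δ*R n - t) atTop atTop := by
      apply Tendsto.atTop_add _ tendsto_const_nhds
      exact hR.const_mul_atTop (by linarith : (0:ℝ) < 2*δ)
    apply squeeze_zero_norm _ (exp_neg_comp_tendsto h1)
    intro n
    rw [Real.norm_eq_abs, abs_of_pos (Real.exp_pos _)]
    apply Real.exp_le_exp.2
    have := hlow n
    linarith
  have hxA : ∀ n, x n = A n * Real.exp (R n - 2*r n + t) := by
    intro n
    rw [hAdef]
    dsimp only
    rw [mul_assoc, ← Real.exp_add, show 2*r n - t - R n + (R n - 2*r n + t) = 0 by ring,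
      Real.exp_zero, mul_one]
  have hx0 : Tendsto x atTop (𝓝 0) := by
    have := hA.mul hu0
    rw [mul_zero] at this
    exact this.congr (fun n => (hxA n).symm)
  have hxpos : ∀ᶠ n in atTop, 0 < x n := by
    filter_upwards [hR.eventually_gt_atTop (t+1), hrT.eventually_ge_atTop (t+1)] with n h1 h2
    have hc : Real.cosh t < Real.cosh (R n) := by
      rw [Real.cosh_lt_cosh, abs_of_pos ht, abs_of_pos (by linarith : (0:ℝ) < R n)]
      linarith
    have hs1 : (0:ℝ) < Real.sinh (r n) := Real.sinh_pos_iff.2 (by linarith)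
    have hs2 : (0:ℝ) < Real.sinh (r n - t) := Real.sinh_pos_iff.2 (by linarith)
    rw [hxdef]
    dsimp only
    exact div_pos (by linarith) (by positivity)
  have hxle2 : ∀ᶠ n in atTop, x n ≤ 2 := by
    have : ∀ᶠ n in atTop, x n < 2 := hx0.eventually_lt_const (by norm_num)
    filter_upwards [this] with n h; linarith
  -- θ → 0
  have hθten : Tendsto θ atTop (𝓝 0) := by
    have h1 : Tendsto (fun n => 1 - x n) atTop (𝓝 1) := by
      have := tendsto_const_nhds.sub hx0 (α := ℕ) (f := fun _ => (1:ℝ))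
      simpa using this
    have := (Real.continuous_arccos.tendsto 1).comp h1
    rwa [Real.arccos_one] at this
  have hθpos : ∀ᶠ n in atTop, 0 < θ n := by
    filter_upwards [hxpos] with n h
    exact Real.arccos_pos.2 (by linarith)
  have hθltπ : ∀ n, θ n ≤ π := fun n => Real.arccos_le_pi _
  -- Q1 = (θ/2)/sin(θ/2) → 1
  have hQ1 : Tendsto (fun n => (θ n / 2) / Real.sin (θ n / 2)) atTop (𝓝 1) := by
    have hcomp : Tendsto (fun n => θ n / 2) atTop (𝓝[≠] 0) := by
      apply tendsto_nhdsWithin_of_tendsto_nhds_of_eventually_within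
      · simpa using hθten.div_const 2
      · filter_upwards [hθpos] with n h
        simp only [Set.mem_compl_iff, Set.mem_singleton_iff]
        positivity
    have hratio : Tendsto (fun n => Real.sin (θ n / 2) / (θ n / 2)) atTop (𝓝 1) :=
      sin_div_tendsto_one.comp hcomp
    have h2 := hratio.inv₀ (one_ne_zero)
    rw [inv_one] at h2
    apply h2.congr
    intro n
    rw [inv_div]
  -- Q2 = sqrt (2 * A) → 2
  have hQ2 : Tendsto (fun n => Real.sqrt (2 * A n)) atTop (𝓝 2) := by
    have h4 : Tendsto (fun n => 2 * A n) atTop (𝓝 4) := by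
      have := hA.const_mul 2
      norm_num at this
      exact this
    have := (Real.continuous_sqrt.tendsto 4).comp h4
    have h42 : Real.sqrt 4 = 2 := by
      rw [show (4:ℝ) = 2^2 by norm_num, Real.sqrt_sq (by norm_num : (0:ℝ) ≤ 2)]
    rwa [h42] at this
  -- Q3 → 1/2
  have hQ3 : Tendsto (fun n => Real.sinh (α*(r n - t)) * Real.exp (-(α*(r n - t)))) atTop (𝓝 (1/2)) :=
    sinh_exp_tendsto hαsT
  -- Q4 → (α-1/2) * exp(-(α-1/2) t)  -- includes all constants
  have hQ4 : Tendsto (fun n => α * ((α - 1/2)/(2*α)) * Real.exp (-(α-1/2)*t)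
      * (Real.exp (α * R n) / (Real.cosh (α * R n) - 1))) atTop
      (𝓝 ((α - 1/2) * Real.exp (-(α-1/2)*t))) := by
    have hW : Tendsto (fun n => (Real.cosh (α * R n) - 1) * Real.exp (-(α * R n))) atTop (𝓝 (1/2)) :=
      cosh_sub_one_exp_tendsto hαRT
    have hWinv : Tendsto (fun n => ((Real.cosh (α * R n) - 1) * Real.exp (-(α * R n)))⁻¹) atTop
        (𝓝 2) := by
      have h := hW.inv₀ (by norm_num : (1/2 : ℝ) ≠ 0)
      rw [show ((1:ℝ)/2)⁻¹ = 2 by norm_num] at h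
      exact h
    have heq : ∀ n, ((Real.cosh (α * R n) - 1) * Real.exp (-(α * R n)))⁻¹
        = Real.exp (α * R n) / (Real.cosh (α * R n) - 1) := by
      intro n
      rw [mul_inv, Real.exp_neg, inv_inv, div_eq_mul_inv, mul_comm]
    have h2 : Tendsto (fun n => Real.exp (α * R n) / (Real.cosh (α * R n) - 1)) atTop (𝓝 2) := by
      rw [show (fun n => Real.exp (α * R n) / (Real.cosh (α * R n) - 1))
        = fun n => ((Real.cosh (α * R n) - 1) * Real.exp (-(α * R n)))⁻¹ from funext fun n => (heq n).symm]
      exact hWinv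
    have := (tendsto_const_nhds (x := α * ((α - 1/2)/(2*α)) * Real.exp (-(α-1/2)*t))).mul h2
    have hconst : α * ((α - 1/2)/(2*α)) * Real.exp (-(α-1/2)*t) * 2
        = (α - 1/2) * Real.exp (-(α-1/2)*t) := by
      field_simp
    rwa [hconst] at this
  -- assemble
  have hlim := (hQ1.mul hQ2).mul (hQ3.mul hQ4)
  have hfin : (1 * 2) * ((1/2) * ((α - 1/2) * Real.exp (-(α-1/2)*t)))
      = (α - 1/2) * Real.exp (-(α - 1/2)*t) := by ring
  rw [hfin] at hlim
  apply hlim.congr'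
  filter_upwards [hrT.eventually_ge_atTop (t+1), hxpos, hxle2, hθpos] with n hrn hxp hx2 hθp
  have hmem : t ∈ Set.Ioc (0:ℝ) (r n) := ⟨ht, by linarith⟩
  have hs1 : (0:ℝ) < Real.sinh (r n) := Real.sinh_pos_iff.2 (by linarith)
  have hs2 : (0:ℝ) < Real.sinh (r n - t) := Real.sinh_pos_iff.2 (by linarith)
  have hcoshd : (0:ℝ) < Real.cosh (α * R n) - 1 := by
    have h1 : (0:ℝ) < α * R n := by
      have : (0:ℝ) < r n := by linarith
      have : (0:ℝ) < R n := lt_of_lt_of_le this (hhigh n)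
      positivity
    have := Real.cosh_lt_cosh.2 (by rwa [abs_zero, abs_of_pos h1] : |(0:ℝ)| < |α * R n|)
    rw [Real.cosh_zero] at this
    linarith
  have hcarg : (Real.cosh (r n) * Real.cosh (r n - t) - Real.cosh (R n))
      /(Real.sinh (r n) * Real.sinh (r n - t)) = 1 - x n := by
    have hct : Real.cosh (r n) * Real.cosh (r n - t) - Real.sinh (r n) * Real.sinh (r n - t)
        = Real.cosh t := by
      rw [← Real.cosh_sub]
      congr 1
      ring
    rw [hxdef]
    dsimp only
    have hd : Real.sinh (r n) * Real.sinh (r n - t) ≠ 0 := by positivity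
    field_simp
    linear_combination hct
  have hsinpos : 0 < Real.sin (θ n / 2) := by
    apply Real.sin_pos_of_pos_of_lt_pi (by positivity)
    have := hθltπ n
    have := Real.pi_pos
    linarith
  have e1 : Real.arccos (1 - x n) = ((θ n / 2)/Real.sin (θ n / 2)) * Real.sqrt (2 * x n) := by
    rw [← two_sin_half_arccos hxp.le hx2]
    show θ n = _
    field_simp
    rfl
  have hAnn : (0:ℝ) ≤ 2 * A n := by
    rw [hAdef]
    dsimp only
    positivity
  have e2 : Real.sqrt (2 * x n) = Real.sqrt (2 * A n) * Real.exp ((R n - 2*r n + t)/2) := by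
    rw [hxA n, show 2 * (A n * Real.exp (R n - 2*r n + t)) = (2 * A n) * Real.exp (R n - 2*r n + t)
      by ring, Real.sqrt_mul hAnn, sqrt_exp']
  have e3 : Real.sinh (α*(r n - t))
      = (Real.sinh (α*(r n - t)) * Real.exp (-(α*(r n - t)))) * Real.exp (α*(r n - t)) := by
    rw [mul_assoc, ← Real.exp_add, neg_add_cancel, Real.exp_zero, mul_one]
  have e4 : Real.exp (R n*(α-1/2) - r n*(α-1)) * Real.exp ((R n - 2*r n + t)/2)
        * Real.exp (α*(r n - t))
      = Real.exp (-(α-1/2)*t) * Real.exp (α * R n) := by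
    rw [← Real.exp_add, ← Real.exp_add, ← Real.exp_add]
    congr 1
    ring
  rw [Set.indicator_of_mem hmem]
  symm
  show (α - 1/2)/(2*α) * Real.exp (R n*(α-1/2) - r n*(α-1)) / (Real.cosh (α*R n) - 1) *
    (Real.arccos ((Real.cosh (r n) * Real.cosh (r n - t) - Real.cosh (R n))
      /(Real.sinh (r n) * Real.sinh (r n - t)))
      * (α * Real.sinh (α*(r n - t)))) = _
  rw [hcarg, e1, e2]
  nth_rewrite 1 [e3]
  linear_combination (((θ n / 2)/Real.sin (θ n / 2)) * Real.sqrt (2*A n)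
    * (Real.sinh (α*(r n - t)) * Real.exp (-(α*(r n - t)))) * α * ((α-1/2)/(2*α))
    * (Real.cosh (α*R n) - 1)⁻¹) * e4


lemma fAux_measurable (α r R : ℝ) : Measurable (fAux α r R) := by
  unfold fAux
  apply Measurable.mul
  · exact measurable_const
  · apply Measurable.mul
    · apply Real.continuous_arccos.measurable.comp
      apply Measurable.div <;> fun_prop
    · fun_prop

lemma main_aux (α δ : ℝ) (hα : 1 / 2 < α) (hδ0 : 0 < δ) (hδ1 : δ ≤ 1 / 2)
    (R r : ℕ → ℝ)
    (hR : Tendsto R atTop atTop)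
    (hlow : ∀ n, (1 / 2 + δ) * R n ≤ r n) (hhigh : ∀ n, r n ≤ R n)
    (hbig : ∀ n, 2 ≤ R n ∧ 4 ≤ α * R n) :
    Tendsto (fun n =>
        hrgJ α (r n) (R n) * (Real.pi * (α - 1 / 2) / (2 * α)) *
          Real.exp (R n * (α - 1 / 2) - r n * (α - 1)))
      atTop (nhds 1) := by
  have hα0 : (0:ℝ) < α := by linarith
  have hr0 : ∀ n, 0 < r n := by
    intro n
    have := (hbig n).1
    have := hlow n
    nlinarith
  set β := min (1/2) (α - 1/2) with hβ
  have hβ0 : 0 < β := lt_min (by norm_num) (by linarith)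
  set M := (α-1/2)*(7 + 4*Real.exp α) with hM
  have hMnn : 0 ≤ M := by
    have := Real.exp_pos α
    rw [hM]; nlinarith
  -- dominated convergence
  have hdct : Tendsto (fun n => ∫ t in Ioi (0:ℝ), (Ioc (0:ℝ) (r n)).indicator (fAux α (r n) (R n)) t)
      atTop (𝓝 (∫ t in Ioi (0:ℝ), (α - 1/2) * Real.exp (-(α - 1/2)*t))) := by
    apply MeasureTheory.tendsto_integral_of_dominated_convergence
      (bound := fun t => M * Real.exp (-β * t))
    · intro n
      exact ((fAux_measurable α (r n) (R n)).indicator measurableSet_Ioc).aestronglyMeasurable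
    · have : IntegrableOn (fun t => Real.exp (-β * t)) (Ioi (0:ℝ)) :=
        exp_neg_integrableOn_Ioi 0 hβ0
      exact (this.const_mul M)
    · intro n
      filter_upwards [ae_restrict_mem measurableSet_Ioi] with t ht
      by_cases hmem : t ∈ Ioc (0:ℝ) (r n)
      · rw [Set.indicator_of_mem hmem, Real.norm_eq_abs,
          abs_of_nonneg (fAux_nonneg α (r n) (R n) t hα hmem.2)]
        exact fAux_bound α δ (r n) (R n) t hα hδ0 hδ1 (hbig n).1 (hbig n).2
          (hlow n) (hhigh n) ht hmem.2
      · rw [Set.indicator_of_notMem hmem]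
        simp only [norm_zero]
        positivity
    · filter_upwards [ae_restrict_mem measurableSet_Ioi] with t ht
      exact fAux_tendsto α δ hα hδ0 hδ1 R r hR hlow hhigh t ht
  have hint1 : (∫ t in Ioi (0:ℝ), (α - 1/2) * Real.exp (-(α - 1/2)*t)) = 1 := by
    rw [show (fun t : ℝ => (α-1/2)*Real.exp (-(α-1/2)*t))
      = fun t : ℝ => (α-1/2)*Real.exp (-((α-1/2)*t)) from funext fun t => by rw [neg_mul]]
    exact integral_rate _ (by linarith)
  rw [hint1] at hdct
  apply hdct.congr
  intro n
  exact (T_eq α (r n) (R n) hα0 (hr0 n) (hhigh n)).symm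

/-- For `r > R/2`, `μ(B_r(R) ∩ B_0(r)) = (2α/(π(α - 1/2))) e^{-R(α-1/2) + r(α-1)} (1 - o(1))`:
for sequences `R_n → ∞` and `(1/2 + δ) R_n ≤ r_n ≤ R_n`, the normalized quantity
`J(r_n, R_n) · (π(α - 1/2)/(2α)) · e^{R_n(α - 1/2) - r_n(α - 1)}` tends to `1`. -/
theorem measure_ball_inter_inner_disk_asymptotic (α δ : ℝ) (hα : 1 / 2 < α)
    (hδ0 : 0 < δ) (hδ1 : δ ≤ 1 / 2)
    (R r : ℕ → ℝ) (hRnn : ∀ n, 0 ≤ R n) (hrnn : ∀ n, 0 ≤ r n)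
    (hR : Tendsto R atTop atTop)
    (hlow : ∀ n, (1 / 2 + δ) * R n ≤ r n) (hhigh : ∀ n, r n ≤ R n) :
    Tendsto (fun n =>
        hrgJ α (r n) (R n) * (Real.pi * (α - 1 / 2) / (2 * α)) *
          Real.exp (R n * (α - 1 / 2) - r n * (α - 1)))
      atTop (nhds 1) := by
  have hα0 : (0:ℝ) < α := by linarith
  obtain ⟨N, hN⟩ := Filter.eventually_atTop.1 (hR.eventually_ge_atTop (max 2 (4/α)))
  rw [← tendsto_add_atTop_iff_nat N]
  apply main_aux α δ hα hδ0 hδ1 (fun n => R (n + N)) (fun n => r (n + N))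
  · exact hR.comp (tendsto_add_atTop_nat N)
  · intro n; exact hlow (n + N)
  · intro n; exact hhigh (n + N)
  · intro n
    have h := hN (n + N) (Nat.le_add_left N n)
    constructor
    · exact le_trans (le_max_left _ _) h
    · have h2 : 4/α ≤ R (n + N) := le_trans (le_max_right _ _) h
      rw [div_le_iff₀ hα0] at h2
      linarith [h2]
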